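/- arXiv:2601.09321 — 2 statements merged into one kernel-verified Lean document; each statement's English description precedes it below -/
import Mathlib

section
/- For all natural numbers m ≥ 2 and n ≥ 2 and every serialization π of the m×n grid (a bijection from cells to Fin (m·n)), there exists a cell p whose set of grid-adjacent cells is not equal to the preimage under π of the sequential neighborhood of π(p). In other words, no bijective flattening of a two-dimensional grid (with both sides at least 2) maps the visual neighborhood of every cell exactly onto the set of sequentially adjacent indices. -/
/-- Two cells of the `m × n` grid are grid-adjacent (visual neighbors) if they
differ by exactly 1 in exactly one coordinate. -/
def gridAdj {m n : ℕ} (p q : Fin m × Fin n) : Prop :=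
  Nat.dist p.1.val q.1.val + Nat.dist p.2.val q.2.val = 1

/-- Two indices of `Fin N` are sequentially adjacent if they differ by exactly 1. -/
def seqAdj {N : ℕ} (i j : Fin N) : Prop :=
  Nat.dist i.val j.val = 1

/-- For every serialization of an `m × n` grid with `m, n ≥ 2`, some cell's set of
visual neighbors differs from the preimage of the sequential neighborhood of its index. -/
theorem no_serialization_preserves_all_neighborhoods
    (m n : ℕ) (hm : 2 ≤ m) (hn : 2 ≤ n)
    (π : (Fin m × Fin n) ≃ Fin (m * n)) :
    ∃ p : Fin m × Fin n,
      {q : Fin m × Fin n | gridAdj p q} ≠ ⇑π ⁻¹' {j : Fin (m * n) | seqAdj (π p) j} := by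
  by_contra h
  push_neg at h
  have key : ∀ p q : Fin m × Fin n, gridAdj p q ↔ seqAdj (π p) (π q) := by
    intro p q
    have := Set.ext_iff.mp (h p) q
    simpa using this
  have pos : 0 < m * n := Nat.mul_pos (by omega) (by omega)
  set p : Fin m × Fin n := π.symm ⟨0, pos⟩ with hp
  have hπp : (π p).val = 0 := by simp [hp]
  -- neighbors of p in each direction
  have step : ∀ (k : ℕ) (hk : 2 ≤ k) (r : Fin k), ∃ r' : Fin k,
      Nat.dist r.val r'.val = 1 := by
    intro k hk r
    rcases Nat.lt_or_ge (r.val + 1) k with hlt | hge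
    · exact ⟨⟨r.val + 1, hlt⟩, by simp [Nat.dist]⟩
    · have hr1 : 1 ≤ r.val := by have := r.isLt; omega
      refine ⟨⟨r.val - 1, by omega⟩, ?_⟩
      simp [Nat.dist]; omega
  obtain ⟨r', hr'⟩ := step m hm p.1
  obtain ⟨c', hc'⟩ := step n hn p.2
  have hg1 : gridAdj p (r', p.2) := by
    simp [gridAdj, Nat.dist_self, hr']
  have hg2 : gridAdj p (p.1, c') := by
    simp [gridAdj, Nat.dist_self, hc']
  have hs1 : seqAdj (π p) (π (r', p.2)) := (key _ _).mp hg1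
  have hs2 : seqAdj (π p) (π (p.1, c')) := (key _ _).mp hg2
  unfold seqAdj at hs1 hs2
  rw [hπp] at hs1 hs2
  have hv1 : (π (r', p.2)).val = 1 := by
    have := hs1; simp [Nat.dist] at this; omega
  have hv2 : (π (p.1, c')).val = 1 := by
    have := hs2; simp [Nat.dist] at this; omega
  have : π (r', p.2) = π (p.1, c') := Fin.ext (hv1.trans hv2.symm)
  have heq := π.injective this
  have : p.2 = c' := congrArg Prod.snd heq
  rw [← this] at hc'
  simp [Nat.dist_self] at hc'
end

section
/- For all natural numbers m ≥ 3 and n ≥ 3, for every serialization π of the m×n grid, and for every interior cell p (a cell (r,c) with 0 < r < m−1 and 0 < c < n−1), the set of grid-adjacent cells of p is not equal to the preimage under π of the sequential neighborhood of π(p): the former has cardinality 4 while the latter has cardinality at most 2. -/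
/-- An interior cell of the `m × n` grid. -/
def IsInterior {m n : ℕ} (p : Fin m × Fin n) : Prop :=
  0 < p.1.val ∧ p.1.val < m - 1 ∧ 0 < p.2.val ∧ p.2.val < n - 1

/-- For `m, n ≥ 3`, every serialization, and every interior cell `p`, the set of
grid neighbors of `p` differs from the preimage of the sequential neighborhood of
`π p`: the former has cardinality `4`, the latter at most `2`. -/
theorem interior_neighborhood_mismatch
    (m n : ℕ) (hm : 3 ≤ m) (hn : 3 ≤ n)
    (π : (Fin m × Fin n) ≃ Fin (m * n))
    (p : Fin m × Fin n) (hp : IsInterior p) :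
    {q : Fin m × Fin n | gridAdj p q} ≠ ⇑π ⁻¹' {j : Fin (m * n) | seqAdj (π p) j} ∧
    {q : Fin m × Fin n | gridAdj p q}.ncard = 4 ∧
    (⇑π ⁻¹' {j : Fin (m * n) | seqAdj (π p) j}).ncard ≤ 2 := by
  obtain ⟨r, c⟩ := p
  obtain ⟨h1, h2, h3, h4⟩ := hp
  simp only at h1 h2 h3 h4
  -- the four neighbors
  set a : Fin m × Fin n := (⟨r.val - 1, by omega⟩, c) with ha
  set b : Fin m × Fin n := (⟨r.val + 1, by omega⟩, c) with hb
  set d : Fin m × Fin n := (r, ⟨c.val - 1, by omega⟩) with hd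
  set e : Fin m × Fin n := (r, ⟨c.val + 1, by omega⟩) with he
  have hset : {q : Fin m × Fin n | gridAdj (r, c) q} = {a, b, d, e} := by
    ext ⟨x, y⟩
    have hx := x.isLt
    have hy := y.isLt
    simp only [Set.mem_setOf_eq, gridAdj, Nat.dist, Set.mem_insert_iff,
      Set.mem_singleton_iff, ha, hb, hd, he, Prod.ext_iff, Fin.ext_iff]
    omega
  have hcard : ({a, b, d, e} : Set (Fin m × Fin n)).ncard = 4 := by
    have hab : a ≠ b := by simp [ha, hb, Prod.ext_iff, Fin.ext_iff]; try omega
    have had : a ≠ d := by simp [ha, hd, Prod.ext_iff, Fin.ext_iff]; try omega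
    have hae : a ≠ e := by simp [ha, he, Prod.ext_iff, Fin.ext_iff]; try omega
    have hbd : b ≠ d := by simp [hb, hd, Prod.ext_iff, Fin.ext_iff]; try omega
    have hbe : b ≠ e := by simp [hb, he, Prod.ext_iff, Fin.ext_iff]; try omega
    have hde : d ≠ e := by simp [hd, he, Prod.ext_iff, Fin.ext_iff]; try omega
    rw [Set.ncard_insert_of_notMem (by simp [hab, had, hae]) (Set.toFinite _),
        Set.ncard_insert_of_notMem (by simp [hbd, hbe]) (Set.toFinite _),
        Set.ncard_insert_of_notMem (by simp [hde]) (Set.toFinite _),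
        Set.ncard_singleton]
  set i := π (r, c) with hi
  have hpre : (⇑π ⁻¹' {j : Fin (m * n) | seqAdj i j}).ncard ≤ 2 := by
    have heq : ⇑π ⁻¹' {j : Fin (m * n) | seqAdj i j}
        = ⇑π.symm '' {j : Fin (m * n) | seqAdj i j} := by
      rw [Equiv.image_eq_preimage_symm]
      simp
    rw [heq, Set.ncard_image_of_injective _ π.symm.injective]
    have hN : 0 < m * n := by positivity
    set j1 : Fin (m * n) := ⟨i.val - 1, by omega⟩ with hj1
    set j2 : Fin (m * n) := if h : i.val + 1 < m * n then ⟨i.val + 1, h⟩ else j1 with hj2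
    have hsub : {j : Fin (m * n) | seqAdj i j} ⊆ {j1, j2} := by
      intro j hj
      simp only [Set.mem_setOf_eq, seqAdj, Nat.dist] at hj
      have hjl := j.isLt
      simp only [Set.mem_insert_iff, Set.mem_singleton_iff, hj1, hj2, Fin.ext_iff]
      by_cases h : i.val + 1 < m * n
      · simp only [dif_pos h]; omega
      · simp only [dif_neg h]; omega
    calc ({j : Fin (m * n) | seqAdj i j}).ncard ≤ ({j1, j2} : Set (Fin (m*n))).ncard :=
          Set.ncard_le_ncard hsub (Set.toFinite _)
      _ ≤ 2 := by
          refine le_trans (Set.ncard_insert_le _ _) ?_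
          simp
  refine ⟨?_, hset ▸ hcard, hpre⟩
  intro hEq
  rw [← hEq] at hpre
  rw [hset, hcard] at hpre
  omega
end
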